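/- arXiv:2304.07252 — 2 statements merged into one kernel-verified Lean document; each statement's English description precedes it below -/
import Mathlib

section
/- Let a, ã, b, b̃ ∈ L^∞(T) with {a,b} and {ã,b̃} nondegenerate (i.e., a, b, a−b all nonzero a.e., and similarly for ã, b̃). Then S_{a,b} S_{ã,b̃} = S_{aã, bb̃} if and only if ã ∈ H^∞ and b̃ ∈ conj(H^∞). -/
open MeasureTheory Complex Real AddCircle
open scoped ENNReal ComplexConjugate

noncomputable section

instance : Fact (0 < 2 * π) := ⟨by positivity⟩

/-- Normalized Haar (Lebesgue) measure on the unit circle, realized as `AddCircle (2π)`. -/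
abbrev μT : Measure (AddCircle (2 * π)) := AddCircle.haarAddCircle

/-- The Lebesgue space `L²(𝕋)`. -/
abbrev L2 : Type := Lp ℂ 2 μT

/-- The space `L^∞(𝕋)`. -/
abbrev Linf : Type := Lp ℂ ∞ μT

/-- Multiplication of an `L²` function by an `L^∞` function, as an element of `L²`. -/
def mul2 (a : Linf) (f : L2) : L2 :=
  ((Lp.memLp f).smul (Lp.memLp a)).toLp ((a : AddCircle (2 * π) → ℂ) • (f : AddCircle (2 * π) → ℂ))

lemma mul2_coe (a : Linf) (f : L2) :
    (mul2 a f : AddCircle (2 * π) → ℂ) =ᵐ[μT] fun x => a x * f x :=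
  (MemLp.coeFn_toLp _)

/-- Multiplication in `L^∞`. -/
def mulInf (a b : Linf) : Linf :=
  ((Lp.memLp b).smul (Lp.memLp a)).toLp ((a : AddCircle (2 * π) → ℂ) • (b : AddCircle (2 * π) → ℂ))

lemma mulInf_coe (a b : Linf) :
    (mulInf a b : AddCircle (2 * π) → ℂ) =ᵐ[μT] fun x => a x * b x :=
  (MemLp.coeFn_toLp _)

/-- Complex conjugation on `Lp`. -/
def conjLp {p : ℝ≥0∞} [Fact (1 ≤ p)] (f : Lp ℂ p μT) : Lp ℂ p μT :=
  MemLp.toLp (fun x => conj (f x))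
    ⟨continuous_star.comp_aestronglyMeasurable (Lp.aestronglyMeasurable f),
      by
        rw [eLpNorm_congr_norm_ae (g := (f : AddCircle (2 * π) → ℂ))
          (Filter.Eventually.of_forall fun x => by simp)]
        exact (Lp.memLp f).2⟩

lemma conjLp_coe {p : ℝ≥0∞} [Fact (1 ≤ p)] (f : Lp ℂ p μT) :
    (conjLp f : AddCircle (2 * π) → ℂ) =ᵐ[μT] fun x => conj (f x) :=
  (MemLp.coeFn_toLp _)

/-- The Hardy space `H²`, as the subspace of `L²(𝕋)` of functions whose negative Fourier
coefficients vanish. -/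
def Hardy : Submodule ℂ L2 where
  carrier := {f | ∀ n : ℤ, n < 0 → fourierBasis.repr f n = 0}
  add_mem' := fun hf hg n hn => by simp [hf n hn, hg n hn]
  zero_mem' := fun n hn => by simp
  smul_mem' := fun c f hf n hn => by simp [hf n hn]

lemma hardy_isClosed : IsClosed (Hardy : Set L2) := by
  have h : (Hardy : Set L2)
      = ⋂ n : ℤ, ⋂ _ : n < 0, {f : L2 | fourierBasis.repr f n = 0} := by
    ext f
    simp [Hardy, Set.mem_iInter]
  rw [h]
  refine isClosed_iInter fun n => isClosed_iInter fun hn => ?_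
  have hc : Continuous fun f : L2 => fourierBasis.repr f n := by
    have : (fun f : L2 => fourierBasis.repr f n)
        = fun f : L2 => (innerSL ℂ (fourierBasis n : L2)) f := by
      ext f
      rw [HilbertBasis.repr_apply_apply]
      rfl
    rw [this]
    exact (innerSL ℂ (fourierBasis n : L2)).continuous
  exact isClosed_eq hc continuous_const

instance : CompleteSpace Hardy := hardy_isClosed.completeSpace_coe

/-- The Riesz projection `P⁺ : L² → L²`, i.e. the orthogonal projection onto `H²`. -/
def Pplus : L2 →L[ℂ] L2 := Hardy.subtypeL.comp Hardy.orthogonalProjectionOnto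

/-- The complementary projection `P⁻ = I - P⁺`. -/
def Pminus : L2 →L[ℂ] L2 := ContinuousLinearMap.id ℂ L2 - Pplus

lemma mul2_norm_le (a : Linf) (f : L2) : ‖mul2 a f‖ ≤ ‖a‖ * ‖f‖ := by
  rw [mul2, Lp.norm_toLp]
  have h := eLpNorm_smul_le_eLpNorm_top_mul_eLpNorm 2
    (Lp.aestronglyMeasurable f) (φ := (a : AddCircle (2 * π) → ℂ))
  refine le_trans (ENNReal.toReal_mono ?_ h) ?_
  · exact ENNReal.mul_ne_top (Lp.memLp a).2.ne (Lp.memLp f).2.ne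
  · rw [ENNReal.toReal_mul, Lp.norm_def, Lp.norm_def]

/-- Multiplication by an `L^∞` function `a`, as a bounded operator `M_a` on `L²`. -/
def Mult (a : Linf) : L2 →L[ℂ] L2 :=
  LinearMap.mkContinuous
    { toFun := mul2 a
      map_add' := fun f g => by
        refine Lp.ext ?_
        filter_upwards [mul2_coe a (f + g), mul2_coe a f, mul2_coe a g,
          Lp.coeFn_add f g, Lp.coeFn_add (mul2 a f) (mul2 a g)] with x h1 h2 h3 h4 h5
        simp only [h1, h5, Pi.add_apply, h2, h3, h4, mul_add]
      map_smul' := fun c f => by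
        refine Lp.ext ?_
        filter_upwards [mul2_coe a (c • f), mul2_coe a f,
          Lp.coeFn_smul c f, Lp.coeFn_smul c (mul2 a f)] with x h1 h2 h3 h4
        simp only [h1, h4, Pi.smul_apply, h2, h3, smul_eq_mul, RingHom.id_apply]
        ring }
    ‖a‖ (fun f => mul2_norm_le a f)

/-- The paired operator `S_{a,b} = a P⁺ + b P⁻` on `L²(𝕋)`. -/
def pairedS (a b : Linf) : L2 →L[ℂ] L2 :=
  (Mult a).comp Pplus + (Mult b).comp Pminus

/-- The transposed paired operator `Σ_{a,b} = P⁺ a + P⁻ b` on `L²(𝕋)`. -/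
def pairedSigma (a b : Linf) : L2 →L[ℂ] L2 :=
  Pplus.comp (Mult a) + Pminus.comp (Mult b)

/-- Membership in `H^∞`: an `L^∞` function whose negative Fourier coefficients vanish. -/
def MemHinf (a : Linf) : Prop := ∀ n : ℤ, n < 0 → fourierCoeff (a : AddCircle (2 * π) → ℂ) n = 0

/-- A pair `{a,b}` is nondegenerate if `a`, `b` and `a - b` are all nonzero a.e. on `𝕋`. -/
def Nondegenerate (a b : Linf) : Prop :=
  (∀ᵐ x ∂μT, a x ≠ 0) ∧ (∀ᵐ x ∂μT, b x ≠ 0) ∧ (∀ᵐ x ∂μT, a x - b x ≠ 0)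



-- ===== auxiliary lemmas =====

lemma fourierCoeff_congr' {f g : AddCircle (2*π) → ℂ} (h : f =ᵐ[μT] g) (n : ℤ) :
    fourierCoeff f n = fourierCoeff g n := by
  unfold fourierCoeff
  exact integral_congr_ae (h.mono fun x hx => by simp only []; rw [hx])

lemma fourierCoeff_fourier_mul (g : AddCircle (2*π) → ℂ) (m n : ℤ) :
    fourierCoeff (fun x => fourier m x * g x) n = fourierCoeff g (n - m) := by
  unfold fourierCoeff
  refine integral_congr_ae (Filter.Eventually.of_forall fun t => ?_)
  simp only [smul_eq_mul]
  rw [← mul_assoc, ← fourier_add]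
  congr 2
  ring_nf

lemma fourierCoeff_conj' (g : AddCircle (2*π) → ℂ) (n : ℤ) :
    fourierCoeff (fun x => conj (g x)) n = conj (fourierCoeff g (-n)) := by
  unfold fourierCoeff
  rw [← integral_conj]
  refine integral_congr_ae (Filter.Eventually.of_forall fun t => ?_)
  simp only [smul_eq_mul, map_mul, ← fourier_neg, neg_neg]

lemma fourierCoeff_mul2_fourierLp (a : Linf) (m n : ℤ) :
    fourierCoeff ((mul2 a (fourierLp 2 m)) : AddCircle (2*π) → ℂ) n
      = fourierCoeff (a : AddCircle (2*π) → ℂ) (n - m) := by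
  have h1 : (mul2 a (fourierLp 2 m) : AddCircle (2*π) → ℂ)
      =ᵐ[μT] fun x => fourier m x * a x := by
    filter_upwards [mul2_coe a (fourierLp 2 m), coeFn_fourierLp (T := 2*π) 2 m] with x hx hy
    rw [hx, hy]; ring
  rw [fourierCoeff_congr' h1, fourierCoeff_fourier_mul]

lemma fourierBasis_eq (n : ℤ) : (fourierBasis (T := 2*π) n : L2) = fourierLp 2 n := by
  rw [coe_fourierBasis]

lemma fourierLp_mem_hardy {n : ℤ} (hn : 0 ≤ n) : (fourierLp 2 n : L2) ∈ Hardy := by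
  intro m hm
  rw [← fourierBasis_eq, fourierBasis.repr_self, lp.single_apply]
  simp [show m ≠ n by omega]

lemma mem_orthogonal_hardy_iff (f : L2) :
    f ∈ Hardyᗮ ↔ ∀ n : ℤ, 0 ≤ n → fourierBasis.repr f n = 0 := by
  constructor
  · intro h n hn
    have h0 : (inner ℂ (fourierLp 2 n : L2) f : ℂ) = 0 :=
      (Submodule.mem_orthogonal Hardy f).mp h _ (fourierLp_mem_hardy hn)
    rw [HilbertBasis.repr_apply_apply, fourierBasis_eq, h0]
  · intro h
    rw [Submodule.mem_orthogonal]
    intro u hu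
    have hs : HasSum (fun i => fourierBasis.repr u i • (fourierBasis (T := 2*π) i : L2)) u :=
      fourierBasis.hasSum_repr u
    have hs2 : HasSum (fun i : ℤ =>
        (inner ℂ f (fourierBasis.repr u i • (fourierBasis (T := 2*π) i : L2)) : ℂ))
        (inner ℂ f u : ℂ) := hs.mapL (innerSL ℂ f)
    have hz : (fun i : ℤ =>
        (inner ℂ f (fourierBasis.repr u i • (fourierBasis (T := 2*π) i : L2)) : ℂ)) = fun _ => 0 := by
      funext i
      rcases lt_or_ge i 0 with hi | hi
      · rw [hu i hi, zero_smul, inner_zero_right]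
      · rw [inner_smul_right, ← inner_conj_symm, ← HilbertBasis.repr_apply_apply, h i hi,
          map_zero, mul_zero]
    rw [hz] at hs2
    have : (inner ℂ f u : ℂ) = 0 := hs2.unique hasSum_zero
    rw [← inner_conj_symm, this, map_zero]

lemma Pplus_apply (f : L2) : Pplus f = (Hardy.orthogonalProjectionOnto f : L2) := rfl

lemma Pplus_mem (f : L2) : Pplus f ∈ Hardy := (Hardy.orthogonalProjectionOnto f).2

lemma Pplus_eq_self {f : L2} (h : f ∈ Hardy) : Pplus f = f :=
  Submodule.starProjection_eq_self_iff.mpr h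

lemma Pplus_eq_zero {f : L2} (h : f ∈ Hardyᗮ) : Pplus f = 0 := by
  rw [Pplus_apply, Submodule.orthogonalProjectionOnto_apply_of_mem_orthogonal h,
    Submodule.coe_zero]

lemma Pminus_apply (f : L2) : Pminus f = f - Pplus f := rfl

lemma Pminus_mem (f : L2) : Pminus f ∈ Hardyᗮ :=
  Submodule.sub_starProjection_mem_orthogonal (K := Hardy) f

lemma Pminus_eq_zero {f : L2} (h : f ∈ Hardy) : Pminus f = 0 := by
  rw [Pminus_apply, Pplus_eq_self h, sub_self]

lemma Pminus_eq_self {f : L2} (h : f ∈ Hardyᗮ) : Pminus f = f := by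
  rw [Pminus_apply, Pplus_eq_zero h, sub_zero]

lemma Mult_apply (a : Linf) (f : L2) : Mult a f = mul2 a f := rfl


lemma fourierLp_mem_orthogonal {n : ℤ} (hn : n < 0) : (fourierLp 2 n : L2) ∈ Hardyᗮ := by
  rw [mem_orthogonal_hardy_iff]
  intro m hm
  rw [← fourierBasis_eq, fourierBasis.repr_self, lp.single_apply]
  simp [show m ≠ n by omega]

lemma mul2_mem_hardy {a : Linf} (ha : MemHinf a) {f : L2} (hf : f ∈ Hardy) :
    mul2 a f ∈ Hardy := by
  have hs := (fourierBasis.hasSum_repr f).mapL (Mult a)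
  simp only [_root_.map_smul, Mult_apply, fourierBasis_eq] at hs
  refine hardy_isClosed.mem_of_tendsto hs (Filter.Eventually.of_forall fun s => ?_)
  refine Submodule.sum_mem Hardy fun i _ => ?_
  rcases lt_or_ge i 0 with hi | hi
  · rw [hf i hi, zero_smul]; exact Hardy.zero_mem
  · refine Submodule.smul_mem Hardy _ (fun m hm => ?_)
    rw [fourierBasis_repr, fourierCoeff_mul2_fourierLp]
    exact ha (m - i) (by omega)

lemma mul2_mem_orthogonal {b : Linf}
    (hb : ∀ n : ℤ, 0 < n → fourierCoeff (b : AddCircle (2*π) → ℂ) n = 0)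
    {f : L2} (hf : f ∈ Hardyᗮ) : mul2 b f ∈ Hardyᗮ := by
  have hs := (fourierBasis.hasSum_repr f).mapL (Mult b)
  simp only [_root_.map_smul, Mult_apply, fourierBasis_eq] at hs
  refine Hardy.isClosed_orthogonal.mem_of_tendsto hs (Filter.Eventually.of_forall fun s => ?_)
  refine Submodule.sum_mem _ fun i _ => ?_
  rcases lt_or_ge i 0 with hi | hi
  · refine Submodule.smul_mem _ _ ((mem_orthogonal_hardy_iff _).mpr fun m hm => ?_)
    rw [fourierBasis_repr, fourierCoeff_mul2_fourierLp]
    exact hb (m - i) (by omega)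
  · rw [(mem_orthogonal_hardy_iff f).mp hf i hi, zero_smul]; exact Submodule.zero_mem _

lemma memHinf_conj_iff (b : Linf) :
    MemHinf (conjLp b) ↔ ∀ n : ℤ, 0 < n → fourierCoeff (b : AddCircle (2*π) → ℂ) n = 0 := by
  constructor
  · intro h n hn
    have h2 := h (-n) (by omega)
    rw [fourierCoeff_congr' (conjLp_coe b), fourierCoeff_conj', neg_neg] at h2
    have h3 := congrArg (starRingEnd ℂ) h2
    simpa using h3
  · intro h n hn
    rw [fourierCoeff_congr' (conjLp_coe b), fourierCoeff_conj', h (-n) (by omega), map_zero]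

lemma mul2_mul2 (a ta : Linf) (f : L2) : mul2 a (mul2 ta f) = mul2 (mulInf a ta) f := by
  refine Lp.ext ?_
  filter_upwards [mul2_coe a (mul2 ta f), mul2_coe ta f, mul2_coe (mulInf a ta) f,
    mulInf_coe a ta] with x h1 h2 h3 h4
  rw [h1, h2, h3, h4]; ring

/-- For nondegenerate `{a,b}` and `{ã,b̃}`: `S_{a,b} S_{ã,b̃} = S_{aã, bb̃}` iff
`ã ∈ H^∞` and `b̃ ∈ conj(H^∞)`. -/
theorem statement5 (a b ta tb : Linf)
    (h1 : Nondegenerate a b) (h2 : Nondegenerate ta tb) :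
    (pairedS a b).comp (pairedS ta tb) = pairedS (mulInf a ta) (mulInf b tb)
      ↔ MemHinf ta ∧ MemHinf (conjLp tb) := by
  constructor
  · intro h
    obtain ⟨-, -, hab⟩ := h1
    constructor
    · -- apply the identity to e₀
      have he : (fourierLp 2 (0:ℤ) : L2) ∈ Hardy := fourierLp_mem_hardy le_rfl
      have happ := DFunLike.congr_fun h (fourierLp 2 (0:ℤ))
      simp only [ContinuousLinearMap.comp_apply, pairedS, ContinuousLinearMap.add_apply] at happ
      rw [Pplus_eq_self he, Pminus_eq_zero he, map_zero, map_zero, add_zero, add_zero] at happ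
      simp only [Mult_apply] at happ
      set g : L2 := mul2 ta (fourierLp 2 (0:ℤ)) with hgdef
      have hce : (Pminus g : AddCircle (2*π) → ℂ)
          =ᵐ[μT] (g : AddCircle (2*π) → ℂ) - (Pplus g : AddCircle (2*π) → ℂ) := by
        rw [Pminus_apply]; exact Lp.coeFn_sub g (Pplus g)
      have hfun : ((mul2 a (Pplus g) + mul2 b (Pminus g) : L2) : AddCircle (2*π) → ℂ)
          = ((mul2 (mulInf a ta) (fourierLp 2 (0:ℤ)) : L2) : AddCircle (2*π) → ℂ) := by
        rw [happ]
      have key : ∀ᵐ x ∂μT, (Pminus g : AddCircle (2*π) → ℂ) x = 0 := by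
        filter_upwards [Lp.coeFn_add (mul2 a (Pplus g)) (mul2 b (Pminus g)),
          mul2_coe a (Pplus g), mul2_coe b (Pminus g),
          mul2_coe (mulInf a ta) (fourierLp 2 (0:ℤ)), mulInf_coe a ta,
          mul2_coe ta (fourierLp 2 (0:ℤ)), hce, hab] with x c1 c2 c3 c4 c5 c6 c7 c8
        have e1 : a x * (Pplus g) x + b x * (Pminus g) x
            = a x * ta x * (fourierLp 2 (0:ℤ) : L2) x := by
          calc a x * (Pplus g) x + b x * (Pminus g) x
              = (mul2 a (Pplus g) : AddCircle (2*π) → ℂ) x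
                + (mul2 b (Pminus g) : AddCircle (2*π) → ℂ) x := by rw [c2, c3]
            _ = ((mul2 a (Pplus g) + mul2 b (Pminus g) : L2) : AddCircle (2*π) → ℂ) x := c1.symm
            _ = (mul2 (mulInf a ta) (fourierLp 2 (0:ℤ)) : AddCircle (2*π) → ℂ) x := by rw [hfun]
            _ = mulInf a ta x * (fourierLp 2 (0:ℤ) : L2) x := c4
            _ = a x * ta x * (fourierLp 2 (0:ℤ) : L2) x := by rw [c5]
        have e2 : (Pminus g) x = g x - (Pplus g) x := c7
        have e3 : g x = ta x * (fourierLp 2 (0:ℤ) : L2) x := c6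
        have e4 : (a x - b x) * (Pminus g) x = 0 := by
          rw [e2] at e1 ⊢
          rw [e3] at e1 ⊢
          linear_combination -e1
        rcases mul_eq_zero.mp e4 with h0 | h0
        · exact absurd h0 c8
        · exact h0
      have hP0 : Pminus g = 0 := by
        refine Lp.ext ?_
        filter_upwards [key, Lp.coeFn_zero ℂ 2 μT] with x k1 k2
        rw [k1]; exact k2.symm
      have hgH : g ∈ Hardy := by
        have hq := Pminus_apply g
        rw [hP0] at hq
        have : g = Pplus g := (sub_eq_zero.mp hq.symm)
        rw [this]; exact Pplus_mem g
      intro n hn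
      have hz := hgH n hn
      rw [fourierBasis_repr, fourierCoeff_mul2_fourierLp] at hz
      simpa using hz
    · -- apply the identity to e₋₁
      have he : (fourierLp 2 (-1:ℤ) : L2) ∈ Hardyᗮ := fourierLp_mem_orthogonal (by norm_num)
      have happ := DFunLike.congr_fun h (fourierLp 2 (-1:ℤ))
      simp only [ContinuousLinearMap.comp_apply, pairedS, ContinuousLinearMap.add_apply] at happ
      rw [Pplus_eq_zero he, Pminus_eq_self he, map_zero, map_zero, zero_add, zero_add] at happ
      simp only [Mult_apply] at happ
      set g : L2 := mul2 tb (fourierLp 2 (-1:ℤ)) with hgdef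
      have hce : (Pminus g : AddCircle (2*π) → ℂ)
          =ᵐ[μT] (g : AddCircle (2*π) → ℂ) - (Pplus g : AddCircle (2*π) → ℂ) := by
        rw [Pminus_apply]; exact Lp.coeFn_sub g (Pplus g)
      have hfun : ((mul2 a (Pplus g) + mul2 b (Pminus g) : L2) : AddCircle (2*π) → ℂ)
          = ((mul2 (mulInf b tb) (fourierLp 2 (-1:ℤ)) : L2) : AddCircle (2*π) → ℂ) := by
        rw [happ]
      have key : ∀ᵐ x ∂μT, (Pplus g : AddCircle (2*π) → ℂ) x = 0 := by
        filter_upwards [Lp.coeFn_add (mul2 a (Pplus g)) (mul2 b (Pminus g)),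
          mul2_coe a (Pplus g), mul2_coe b (Pminus g),
          mul2_coe (mulInf b tb) (fourierLp 2 (-1:ℤ)), mulInf_coe b tb,
          mul2_coe tb (fourierLp 2 (-1:ℤ)), hce, hab] with x c1 c2 c3 c4 c5 c6 c7 c8
        have e1 : a x * (Pplus g) x + b x * (Pminus g) x
            = b x * tb x * (fourierLp 2 (-1:ℤ) : L2) x := by
          calc a x * (Pplus g) x + b x * (Pminus g) x
              = (mul2 a (Pplus g) : AddCircle (2*π) → ℂ) x
                + (mul2 b (Pminus g) : AddCircle (2*π) → ℂ) x := by rw [c2, c3]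
            _ = ((mul2 a (Pplus g) + mul2 b (Pminus g) : L2) : AddCircle (2*π) → ℂ) x := c1.symm
            _ = (mul2 (mulInf b tb) (fourierLp 2 (-1:ℤ)) : AddCircle (2*π) → ℂ) x := by rw [hfun]
            _ = mulInf b tb x * (fourierLp 2 (-1:ℤ) : L2) x := c4
            _ = b x * tb x * (fourierLp 2 (-1:ℤ) : L2) x := by rw [c5]
        have e2 : (Pminus g) x = g x - (Pplus g) x := c7
        have e3 : g x = tb x * (fourierLp 2 (-1:ℤ) : L2) x := c6
        have e4 : (a x - b x) * (Pplus g) x = 0 := by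
          rw [e2] at e1
          rw [e3] at e1
          linear_combination e1
        rcases mul_eq_zero.mp e4 with h0 | h0
        · exact absurd h0 c8
        · exact h0
      have hP0 : Pplus g = 0 := by
        refine Lp.ext ?_
        filter_upwards [key, Lp.coeFn_zero ℂ 2 μT] with x k1 k2
        rw [k1]; exact k2.symm
      have hgO : g ∈ Hardyᗮ := by
        have hq := Pminus_apply g
        rw [hP0, sub_zero] at hq
        rw [← hq]
        exact Pminus_mem g
      rw [memHinf_conj_iff]
      intro n hn
      have hz := (mem_orthogonal_hardy_iff g).mp hgO (n - 1) (by omega)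
      rw [fourierBasis_repr, fourierCoeff_mul2_fourierLp] at hz
      have : n - 1 - (-1) = n := by ring
      rwa [this] at hz
  · rintro ⟨hta, htb⟩
    ext f
    have hu : mul2 ta (Pplus f) ∈ Hardy := mul2_mem_hardy hta (Pplus_mem f)
    have hv : mul2 tb (Pminus f) ∈ Hardyᗮ :=
      mul2_mem_orthogonal ((memHinf_conj_iff tb).mp htb) (Pminus_mem f)
    simp only [ContinuousLinearMap.comp_apply, pairedS, ContinuousLinearMap.add_apply,
      Mult_apply]
    rw [map_add, map_add, Pplus_eq_self hu, Pplus_eq_zero hv, Pminus_eq_zero hu,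
      Pminus_eq_self hv, add_zero, zero_add]
    rw [mul2_mul2, mul2_mul2]

end
end

section
/- Suppose {a,b} ⊂ L^∞(T) is nondegenerate and f ∈ ker(aP^+ + bP^-). If P^+ f vanishes on a set of positive measure on T, or P^- f vanishes on a set of positive measure, then f = 0. -/
open MeasureTheory Complex Real AddCircle
open scoped ENNReal ComplexConjugate

noncomputable section

/-! Auxiliary infrastructure -/

section Aux

local notation "𝕋" => AddCircle (2 * π)

/-- Multiplication by `fourier n` as a continuous linear operator on `L²`. -/
def SS (n : ℤ) : L2 →L[ℂ] L2 := Mult (fourierLp ∞ n)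

lemma SS_coe (n : ℤ) (v : L2) :
    (SS n v : 𝕋 → ℂ) =ᵐ[μT] fun x => fourier n x * v x := by
  have hrfl : SS n v = mul2 (fourierLp ∞ n) v := rfl
  rw [hrfl]
  filter_upwards [mul2_coe (fourierLp ∞ n) v, coeFn_fourierLp (T := 2 * π) ∞ n] with x h1 h2
  rw [h1, h2]

lemma SS_SS (m n : ℤ) (v : L2) : SS m (SS n v) = SS (m + n) v := by
  refine Lp.ext ?_
  filter_upwards [SS_coe m (SS n v), SS_coe n v, SS_coe (m + n) v] with x h1 h2 h3
  rw [h1, h2, h3, fourier_add]; ring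

lemma SS_zero_apply (v : L2) : SS 0 v = v := by
  refine Lp.ext ?_
  filter_upwards [SS_coe 0 v] with x h1
  rw [h1, fourier_zero, one_mul]

lemma fourierCoeff_congr_ae' {f g : 𝕋 → ℂ} (h : f =ᵐ[μT] g) (n : ℤ) :
    fourierCoeff f n = fourierCoeff g n := by
  unfold fourierCoeff
  exact integral_congr_ae (by filter_upwards [h] with x hx; rw [hx])

lemma repr_SS (n : ℤ) (v : L2) (m : ℤ) :
    fourierBasis.repr (SS n v) m = fourierBasis.repr v (m - n) := by
  rw [fourierBasis_repr, fourierBasis_repr,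
    fourierCoeff_congr_ae' (SS_coe n v) m]
  unfold fourierCoeff
  refine integral_congr_ae (Filter.Eventually.of_forall fun x => ?_)
  simp only [smul_eq_mul]
  rw [show -(m - n) = -m + n by ring, fourier_add]
  ring

lemma eq_zero_of_repr_eq_zero (v : L2) (h : ∀ n : ℤ, fourierBasis.repr v n = 0) :
    v = 0 := by
  have : fourierBasis.repr v = 0 := by
    ext n; simpa using h n
  simpa using (fourierBasis.repr.map_eq_zero_iff).mp this

end Aux
section Aux3

local notation "𝕋" => AddCircle (2 * π)

lemma integral_fourier_zero' : ∫ x : 𝕋, (fourier (0:ℤ)) x ∂μT = 1 := by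
  have : ∀ x : 𝕋, (fourier (0:ℤ)) x = 1 := fun x => fourier_zero
  rw [integral_congr_ae (Filter.Eventually.of_forall this)]
  simp

lemma integral_fourier_ne_zero (m : ℤ) (hm : m ≠ 0) : ∫ x : 𝕋, (fourier m) x ∂μT = 0 := by
  have h := (orthonormal_iff_ite.mp (orthonormal_fourier (T := 2 * π))) 0 m
  rw [if_neg (by omega : ¬ (0:ℤ) = m)] at h
  rw [MeasureTheory.L2.inner_def] at h
  rw [← h]
  refine integral_congr_ae ?_
  filter_upwards [coeFn_fourierLp (T := 2 * π) 2 0, coeFn_fourierLp (T := 2 * π) 2 m]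
    with x h1 h2
  rw [RCLike.inner_apply, h1, h2, fourier_zero]
  simp

end Aux3
section Aux4

local notation "𝕋" => AddCircle (2 * π)

lemma u_integrable (φ : L2) :
    Integrable (fun x => (starRingEnd ℂ) ((φ : 𝕋 → ℂ) x) * (φ : 𝕋 → ℂ) x) μT := by
  have h := MeasureTheory.L2.integrable_inner (𝕜 := ℂ) φ φ
  refine h.congr (Filter.Eventually.of_forall fun x => ?_)
  simp only [RCLike.inner_apply]
  ring

lemma normSq_integrable (φ : L2) :
    Integrable (fun x => ‖(φ : 𝕋 → ℂ) x‖ ^ 2) μT := by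
  have h := (Lp.memLp φ).integrable_norm_rpow (p := 2) (by norm_num) (by norm_num)
  refine h.congr (Filter.Eventually.of_forall fun x => ?_)
  show ‖(φ : 𝕋 → ℂ) x‖ ^ ((2:ℝ≥0∞)).toReal = ‖(φ : 𝕋 → ℂ) x‖ ^ (2:ℕ)
  rw [show ((2:ℝ≥0∞)).toReal = ((2:ℕ):ℝ) by norm_num, Real.rpow_natCast]

lemma u_eq (φ : L2) (x : 𝕋) :
    (starRingEnd ℂ) ((φ : 𝕋 → ℂ) x) * (φ : 𝕋 → ℂ) x
      = ((‖(φ : 𝕋 → ℂ) x‖ ^ 2 : ℝ) : ℂ) := by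
  rw [mul_comm, Complex.mul_conj]
  norm_cast
  rw [Complex.normSq_eq_norm_sq]

lemma integral_ofReal' {f : AddCircle (2 * π) → ℝ} :
    ∫ x, ((f x : ℝ) : ℂ) ∂μT = ((∫ x, f x ∂μT : ℝ) : ℂ) := integral_ofReal

lemma keyIdentity (φ : L2)
    (horth : ∀ n : ℤ, 1 ≤ n → (inner ℂ (SS n φ) φ : ℂ) = 0) (ψ : C(𝕋, ℂ)) :
    ∫ x, ψ x * ((starRingEnd ℂ) ((φ : 𝕋 → ℂ) x) * (φ : 𝕋 → ℂ) x) ∂μT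
      = ((∫ x, ‖(φ : 𝕋 → ℂ) x‖ ^ 2 ∂μT : ℝ) : ℂ) * ∫ x, ψ x ∂μT := by
  set u : 𝕋 → ℂ := fun x => (starRingEnd ℂ) ((φ : 𝕋 → ℂ) x) * (φ : 𝕋 → ℂ) x with hu
  set c : ℝ := ∫ x, ‖(φ : 𝕋 → ℂ) x‖ ^ 2 ∂μT with hc
  have hu_int : Integrable u μT := u_integrable φ
  have hint : ∀ ψ' : C(𝕋, ℂ), Integrable (fun x => ψ' x * u x) μT := fun ψ' =>
    hu_int.bdd_mul ψ'.continuous.aestronglyMeasurable (Filter.Eventually.of_forall fun x => ψ'.norm_coe_le_norm x)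
  have hintc : ∀ ψ' : C(𝕋, ℂ), Integrable (fun x => ψ' x) μT := by
    intro ψ'
    have h := (integrable_const (1:ℂ) (μ := μT)).bdd_mul ψ'.continuous.aestronglyMeasurable
      (Filter.Eventually.of_forall fun x => ψ'.norm_coe_le_norm x)
    simpa using h
  -- the two continuous linear functionals
  set L₁ : C(𝕋, ℂ) →L[ℂ] ℂ := LinearMap.mkContinuous
    { toFun := fun ψ' => ∫ x, ψ' x * u x ∂μT
      map_add' := fun ψ' ψ'' => by
        rw [← integral_add (hint ψ') (hint ψ'')]
        refine integral_congr_ae (Filter.Eventually.of_forall fun x => ?_)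
        simp [add_mul]
      map_smul' := fun r ψ' => by
        rw [← integral_smul]
        refine integral_congr_ae (Filter.Eventually.of_forall fun x => ?_)
        simp [mul_assoc] }
    (∫ x, ‖u x‖ ∂μT)
    (fun ψ' => by
      refine (norm_integral_le_integral_norm _).trans ?_
      refine (integral_mono (hint ψ').norm (hu_int.norm.const_mul ‖ψ'‖) fun x => ?_).trans ?_
      · rw [norm_mul]
        exact mul_le_mul_of_nonneg_right (ψ'.norm_coe_le_norm x) (norm_nonneg _)
      · rw [integral_const_mul]
        exact le_of_eq (mul_comm _ _)) with hL₁
  set L₂ : C(𝕋, ℂ) →L[ℂ] ℂ := LinearMap.mkContinuous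
    { toFun := fun ψ' => (c : ℂ) * ∫ x, ψ' x ∂μT
      map_add' := fun ψ' ψ'' => by
        show (c : ℂ) * ∫ x, (ψ' + ψ'') x ∂μT
          = (c : ℂ) * ∫ x, ψ' x ∂μT + (c : ℂ) * ∫ x, ψ'' x ∂μT
        simp only [ContinuousMap.add_apply]
        rw [integral_add (hintc ψ') (hintc ψ'')]; ring
      map_smul' := fun r ψ' => by
        show (c : ℂ) * ∫ x, (r • ψ') x ∂μT = r • ((c : ℂ) * ∫ x, ψ' x ∂μT)
        simp only [ContinuousMap.smul_apply, smul_eq_mul]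
        rw [integral_const_mul]; ring }
    |c|
    (fun ψ' => by
      show ‖(c : ℂ) * ∫ x, ψ' x ∂μT‖ ≤ |c| * ‖ψ'‖
      rw [norm_mul, Complex.norm_real, Real.norm_eq_abs]
      refine mul_le_mul_of_nonneg_left ?_ (abs_nonneg c)
      refine (norm_integral_le_integral_norm _).trans ?_
      refine (integral_mono (hintc ψ').norm (integrable_const ‖ψ'‖) fun x =>
        ψ'.norm_coe_le_norm x).trans ?_
      simp) with hL₂
  have hdense : Dense ((Submodule.span ℂ (Set.range (fourier (T := 2 * π)))) : Set C(𝕋, ℂ)) :=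
    Submodule.dense_iff_topologicalClosure_eq_top.mpr span_fourier_closure_eq_top
  have hval : ∀ n : ℤ, 1 ≤ n → ∫ x, (fourier (-n)) x * u x ∂μT = 0 := by
    intro n hn
    rw [← horth n hn, MeasureTheory.L2.inner_def]
    refine integral_congr_ae ?_
    filter_upwards [SS_coe n φ] with x h1
    rw [RCLike.inner_apply, h1, hu]
    simp only [map_mul, fourier_neg]
    ring
  have heq : L₁ = L₂ := by
    refine ContinuousLinearMap.ext_on hdense ?_
    rintro _ ⟨m, rfl⟩
    have hLv : L₁ (fourier m) = ∫ x, (fourier m) x * u x ∂μT := rfl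
    have hLv2 : L₂ (fourier m) = (c : ℂ) * ∫ x, (fourier m) x ∂μT := rfl
    rw [hLv, hLv2]
    rcases lt_trichotomy m 0 with hm | hm | hm
    · rw [integral_fourier_ne_zero m (by omega), mul_zero]
      have := hval (-m) (by omega)
      rwa [neg_neg] at this
    · subst hm
      have e1 : ∫ x, (fourier (0:ℤ)) x * u x ∂μT
          = ∫ x, ((‖(φ : 𝕋 → ℂ) x‖ ^ 2 : ℝ) : ℂ) ∂μT :=
        integral_congr_ae (Filter.Eventually.of_forall fun x => by
          show (fourier (0:ℤ)) x * ((starRingEnd ℂ) ((φ : 𝕋 → ℂ) x) * (φ : 𝕋 → ℂ) x)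
            = ((‖(φ : 𝕋 → ℂ) x‖ ^ 2 : ℝ) : ℂ)
          rw [fourier_zero, one_mul, u_eq])
      rw [integral_fourier_zero', mul_one, e1, integral_ofReal']
    · rw [integral_fourier_ne_zero m (by omega), mul_zero]
      have h1 := hval m (by omega)
      have h2 : (starRingEnd ℂ) (∫ x, (fourier (-m)) x * u x ∂μT)
          = ∫ x, (fourier m) x * u x ∂μT := by
        rw [← integral_conj]
        refine integral_congr_ae (Filter.Eventually.of_forall fun x => ?_)
        simp only [hu, map_mul, fourier_neg, starRingEnd_self_apply, RingHom.id_apply,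
          RingHomCompTriple.comp_apply]
        ring
      rw [← h2, h1, map_zero]
  have := congrArg (fun L => L ψ) heq
  exact this

end Aux4
section Aux2

local notation "𝕋" => AddCircle (2 * π)

lemma Lp_eq_zero_iff {p : ℝ≥0∞} [Fact (1 ≤ p)] (w : Lp ℂ p μT) :
    w = 0 ↔ (w : 𝕋 → ℂ) =ᵐ[μT] 0 := by
  constructor
  · rintro rfl; exact Lp.coeFn_zero ℂ p μT
  · intro h; exact Lp.ext (h.trans (Lp.coeFn_zero ℂ p μT).symm)

/-- The indicator function of a measurable set as an element of `L^∞`. -/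
def indLinf (E : Set 𝕋) (hE : MeasurableSet E) : Linf :=
  (memLp_top_of_bound ((measurable_one.indicator hE).aestronglyMeasurable) 1
    (Filter.Eventually.of_forall fun x => by
      by_cases hx : x ∈ E <;> simp [Set.indicator_apply, hx])).toLp (E.indicator 1)

lemma indLinf_coe (E : Set 𝕋) (hE : MeasurableSet E) :
    (indLinf E hE : 𝕋 → ℂ) =ᵐ[μT] E.indicator 1 := MemLp.coeFn_toLp _

/-- The (closed) subspace of `L²` functions vanishing a.e. on `E`. -/
def VE (E : Set 𝕋) (hE : MeasurableSet E) : Submodule ℂ L2 :=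
  LinearMap.ker (Mult (indLinf E hE) : L2 →ₗ[ℂ] L2)

lemma VE_isClosed (E : Set 𝕋) (hE : MeasurableSet E) :
    IsClosed (VE E hE : Set L2) := ContinuousLinearMap.isClosed_ker (f := Mult (indLinf E hE))

lemma mem_VE_iff {E : Set 𝕋} {hE : MeasurableSet E} {v : L2} :
    v ∈ VE E hE ↔ ∀ᵐ x ∂μT, x ∈ E → (v : 𝕋 → ℂ) x = 0 := by
  have h1 : v ∈ VE E hE ↔ mul2 (indLinf E hE) v = 0 := Iff.rfl
  rw [h1, Lp_eq_zero_iff]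
  have h2 : ((mul2 (indLinf E hE) v : L2) : 𝕋 → ℂ) =ᵐ[μT]
      fun x => E.indicator 1 x * v x := by
    filter_upwards [mul2_coe (indLinf E hE) v, indLinf_coe E hE] with x ha hb
    rw [ha, hb]
  constructor
  · intro h
    filter_upwards [h2.symm.trans h] with x hx hxE
    simpa [Set.indicator_apply, hxE] using hx
  · intro h
    refine h2.trans ?_
    filter_upwards [h] with x hx
    by_cases hxE : x ∈ E
    · simp [Set.indicator_apply, hxE, hx hxE]
    · simp [Set.indicator_apply, hxE]

lemma mem_map_topologicalClosure {P : Submodule ℂ L2} {v : L2} (j : ℤ)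
    (hv : v ∈ P.topologicalClosure) :
    SS j v ∈ (P.map (SS j).toLinearMap).topologicalClosure := by
  have h1 : v ∈ closure (P : Set L2) := by
    rwa [← Submodule.topologicalClosure_coe]
  have h2 : SS j v ∈ closure ((SS j) '' (P : Set L2)) :=
    image_closure_subset_closure_image (SS j).continuous ⟨v, h1, rfl⟩
  have h3 : ((SS j) '' (P : Set L2)) = ((P.map (SS j).toLinearMap : Submodule ℂ L2) : Set L2) := by
    rw [Submodule.map_coe]; rfl
  rw [← SetLike.mem_coe, Submodule.topologicalClosure_coe, ← h3]
  exact h2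

lemma map_span_range (F : ℕ → L2) (j : ℤ) :
    (Submodule.span ℂ (Set.range F)).map (SS j).toLinearMap
      = Submodule.span ℂ (Set.range fun n => SS j (F n)) := by
  rw [Submodule.map_span, ← Set.range_comp]; rfl

/-- The hard case of the Luzin–Privalov argument: a nonzero `φ` orthogonal to all its
forward shifts has constant modulus, contradicting vanishing on a positive measure set. -/
lemma case2core (φ : L2) (hφ : φ ≠ 0)
    (horth : ∀ n : ℤ, 1 ≤ n → (inner ℂ (SS n φ) φ : ℂ) = 0)
    (E : Set 𝕋) (hE : MeasurableSet E) (hμE : μT E ≠ 0)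
    (hφE : ∀ᵐ x ∂μT, x ∈ E → (φ : 𝕋 → ℂ) x = 0) : False := by
  set c : ℝ := ∫ x, ‖(φ : 𝕋 → ℂ) x‖ ^ 2 ∂μT with hc
  have hc_int : Integrable (fun x => ‖(φ : 𝕋 → ℂ) x‖ ^ 2) μT := normSq_integrable φ
  have hc_nonneg : 0 ≤ c := integral_nonneg fun x => by positivity
  have hc_pos : 0 < c := by
    rcases hc_nonneg.lt_or_eq with h | h
    · exact h
    · exfalso
      apply hφ
      rw [Lp_eq_zero_iff]
      have h2 := (integral_eq_zero_iff_of_nonneg (fun x => by positivity) hc_int).mp h.symm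
      filter_upwards [h2] with x hx
      have h3 : ‖(φ : 𝕋 → ℂ) x‖ ^ 2 = 0 := hx
      have h4 : ‖(φ : 𝕋 → ℂ) x‖ = 0 := by nlinarith [norm_nonneg ((φ : 𝕋 → ℂ) x)]
      simpa using norm_eq_zero.mp h4
  obtain ⟨φ₀, hφ₀m, hφ₀⟩ : ∃ φ₀ : 𝕋 → ℂ, Measurable φ₀ ∧ (φ : 𝕋 → ℂ) =ᵐ[μT] φ₀ :=
    ⟨(Lp.aestronglyMeasurable φ).mk _,
      ((Lp.aestronglyMeasurable φ).stronglyMeasurable_mk).measurable,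
      (Lp.aestronglyMeasurable φ).ae_eq_mk⟩
  set d : 𝕋 → ℝ≥0∞ := fun x => ENNReal.ofReal (‖φ₀ x‖ ^ 2) with hd
  have hdm : Measurable d := (hφ₀m.norm.pow_const 2).ennreal_ofReal
  have hint0 : Integrable (fun x => ‖φ₀ x‖ ^ 2) μT :=
    hc_int.congr (hφ₀.mono fun x hx => by simp only [hx])
  haveI hfin : IsFiniteMeasure (μT.withDensity d) := by
    refine isFiniteMeasure_withDensity ?_
    rw [← ofReal_integral_eq_lintegral_ofReal hint0
      (Filter.Eventually.of_forall fun x => by positivity)]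
    exact ENNReal.ofReal_ne_top
  have hmeas_eq : μT.withDensity d = μT.withDensity (fun _ => ENNReal.ofReal c) := by
    refine ext_of_forall_lintegral_eq_of_IsFiniteMeasure ?_
    intro f
    have hfm : Measurable fun x : 𝕋 => (f x : ℝ≥0∞) :=
      measurable_coe_nnreal_ennreal.comp f.continuous.measurable
    have hfcont : Continuous fun x : 𝕋 => (f x : ℝ) :=
      NNReal.continuous_coe.comp f.continuous
    obtain ⟨C, hC⟩ := f.bounded
    have hbd : ∀ x : 𝕋, ‖(f x : ℝ)‖ ≤ (f 0 : ℝ) + C := by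
      intro x
      have h1 := hC x 0
      rw [NNReal.dist_eq] at h1
      have h5 := abs_le.mp h1
      rw [Real.norm_eq_abs, abs_le]
      constructor
      · nlinarith [(f x).coe_nonneg]
      · nlinarith
    have hfR_int : Integrable (fun x : 𝕋 => (f x : ℝ)) μT := by
      have h := (integrable_const (1:ℝ) (μ := μT)).bdd_mul
        hfcont.aestronglyMeasurable (Filter.Eventually.of_forall hbd)
      simpa using h
    have hr_int : Integrable (fun x : 𝕋 => (f x : ℝ) * ‖φ₀ x‖ ^ 2) μT :=
      hint0.bdd_mul hfcont.aestronglyMeasurable (Filter.Eventually.of_forall hbd)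
    have hr_int' : Integrable (fun x : 𝕋 => (f x : ℝ) * ‖(φ : 𝕋 → ℂ) x‖ ^ 2) μT :=
      hr_int.congr (hφ₀.mono fun x hx => by simp only [hx])
    -- the scalar identity coming from `keyIdentity`
    have hscalar : ∫ x, (f x : ℝ) * ‖(φ : 𝕋 → ℂ) x‖ ^ 2 ∂μT = c * ∫ x, (f x : ℝ) ∂μT := by
      set ψ : C(𝕋, ℂ) := ⟨fun x => ((f x : ℝ) : ℂ), Complex.continuous_ofReal.comp hfcont⟩
        with hψ
      have hk := keyIdentity φ horth ψ
      have e1 : ∫ x, ψ x * ((starRingEnd ℂ) ((φ : 𝕋 → ℂ) x) * (φ : 𝕋 → ℂ) x) ∂μT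
          = (((∫ x, (f x : ℝ) * ‖(φ : 𝕋 → ℂ) x‖ ^ 2 ∂μT : ℝ)) : ℂ) := by
        rw [← integral_ofReal']
        refine integral_congr_ae (Filter.Eventually.of_forall fun x => ?_)
        show ψ x * ((starRingEnd ℂ) ((φ : 𝕋 → ℂ) x) * (φ : 𝕋 → ℂ) x)
          = (((f x : ℝ) * ‖(φ : 𝕋 → ℂ) x‖ ^ 2 : ℝ) : ℂ)
        rw [u_eq φ x, hψ]
        simp only [ContinuousMap.coe_mk]
        push_cast
        ring
      have e2 : ∫ x, ψ x ∂μT = ((∫ x, (f x : ℝ) ∂μT : ℝ) : ℂ) := by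
        rw [← integral_ofReal']
        rfl
      rw [e1, e2] at hk
      exact_mod_cast hk
    rw [lintegral_withDensity_eq_lintegral_mul μT hdm hfm,
        lintegral_withDensity_eq_lintegral_mul μT measurable_const hfm]
    have l1 : ∀ x : 𝕋, (d * fun x : 𝕋 => (f x : ℝ≥0∞)) x
        = ENNReal.ofReal ((f x : ℝ) * ‖φ₀ x‖ ^ 2) := fun x => by
      show d x * (f x : ℝ≥0∞) = _
      rw [hd, ← ENNReal.ofReal_coe_nnreal, ← ENNReal.ofReal_mul (by positivity)]
      rw [mul_comm]
    have l2 : ∀ x : 𝕋, ((fun _ : 𝕋 => ENNReal.ofReal c) * fun x : 𝕋 => (f x : ℝ≥0∞)) x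
        = ENNReal.ofReal (c * (f x : ℝ)) := fun x => by
      show ENNReal.ofReal c * (f x : ℝ≥0∞) = _
      rw [← ENNReal.ofReal_coe_nnreal, ← ENNReal.ofReal_mul hc_nonneg]
    rw [lintegral_congr l1, lintegral_congr l2,
      ← ofReal_integral_eq_lintegral_ofReal hr_int
        (Filter.Eventually.of_forall fun x => by positivity),
      ← ofReal_integral_eq_lintegral_ofReal (hfR_int.const_mul c)
        (Filter.Eventually.of_forall fun x => by positivity)]
    congr 1
    rw [integral_const_mul]
    have hcongr : (fun x : 𝕋 => (f x : ℝ) * ‖φ₀ x‖ ^ 2)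
        =ᵐ[μT] fun x : 𝕋 => (f x : ℝ) * ‖(φ : 𝕋 → ℂ) x‖ ^ 2 :=
      hφ₀.mono fun x hx => by simp only [hx]
    rw [integral_congr_ae hcongr]
    exact hscalar
  -- evaluate both measures at `E`
  have hE1 : (μT.withDensity d) E = 0 := by
    rw [withDensity_apply d hE]
    have h6 : ∀ᵐ x ∂(μT.restrict E), d x = 0 := by
      rw [ae_restrict_iff' hE]
      filter_upwards [hφE, hφ₀] with x h1 h2 hxE
      rw [hd]
      show ENNReal.ofReal (‖φ₀ x‖ ^ 2) = 0
      rw [← h2, h1 hxE]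
      simp
    rw [lintegral_congr_ae h6, lintegral_zero]
  have hE2 : (μT.withDensity (fun _ => ENNReal.ofReal c)) E = ENNReal.ofReal c * μT E := by
    rw [withDensity_apply _ hE, setLIntegral_const]
  rw [hmeas_eq, hE2] at hE1
  rcases mul_eq_zero.mp hE1 with h7 | h7
  · rw [ENNReal.ofReal_eq_zero] at h7
    linarith
  · exact hμE h7

/-- Luzin–Privalov: an `H²` function vanishing on a set of positive measure vanishes. -/
lemma LP (g : L2) (hg : ∀ n : ℤ, n < 0 → fourierBasis.repr g n = 0)
    (E : Set 𝕋) (hE : MeasurableSet E) (hμE : μT E ≠ 0)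
    (h0 : ∀ᵐ x ∂μT, x ∈ E → (g : 𝕋 → ℂ) x = 0) : g = 0 := by
  set gen : ℕ → L2 := fun n => SS (n : ℤ) g with hgen
  set M₀ : Submodule ℂ L2 := Submodule.span ℂ (Set.range gen) with hM₀
  set N₀ : Submodule ℂ L2 := Submodule.span ℂ (Set.range fun n => gen (n + 1)) with hN₀
  set M : Submodule ℂ L2 := M₀.topologicalClosure with hM
  set N : Submodule ℂ L2 := N₀.topologicalClosure with hN
  have hgM : g ∈ M := by
    have : gen 0 ∈ M₀ := Submodule.subset_span ⟨0, rfl⟩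
    have h00 : gen 0 = g := by rw [hgen]; exact_mod_cast SS_zero_apply g
    rw [← h00]
    exact M₀.le_topologicalClosure this
  have hNM : N ≤ M := Submodule.topologicalClosure_mono
    (Submodule.span_le.mpr (by rintro _ ⟨n, rfl⟩; exact Submodule.subset_span ⟨n + 1, rfl⟩))
  have hMHardy : M ≤ Hardy := by
    refine Submodule.topologicalClosure_minimal _ (Submodule.span_le.mpr ?_) hardy_isClosed
    rintro _ ⟨n, rfl⟩
    intro m hm
    rw [hgen, repr_SS]
    exact hg _ (by omega)
  have hMV : M ≤ VE E hE := by
    refine Submodule.topologicalClosure_minimal _ (Submodule.span_le.mpr ?_) (VE_isClosed E hE)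
    rintro _ ⟨n, rfl⟩
    rw [SetLike.mem_coe, mem_VE_iff]
    filter_upwards [SS_coe (n : ℤ) g, h0] with x h1 h2 hxE
    rw [h1, h2 hxE, mul_zero]
  by_cases hgN : g ∈ N
  · -- Case 1: the shift-invariant case; all Fourier coefficients vanish.
    have hMN : M ≤ N := by
      refine Submodule.topologicalClosure_minimal _ (Submodule.span_le.mpr ?_)
        N₀.isClosed_topologicalClosure
      rintro _ ⟨n, rfl⟩
      match n with
      | 0 =>
        have h00 : gen 0 = g := by rw [hgen]; exact_mod_cast SS_zero_apply g
        rw [h00]; exact hgN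
      | Nat.succ k => exact N₀.le_topologicalClosure (Submodule.subset_span ⟨k, rfl⟩)
    have key : ∀ j : ℕ, SS (-(j : ℤ)) g ∈ M := by
      intro j
      induction j with
      | zero =>
        have h00 : SS (-(0:ℕ) : ℤ) g = g := by norm_num; exact SS_zero_apply g
        rw [h00]; exact hgM
      | succ k ih =>
        have h1 : SS (-(k : ℤ)) g ∈ N := hMN ih
        have h2 : SS (-1) (SS (-(k : ℤ)) g) ∈ (N₀.map (SS (-1)).toLinearMap).topologicalClosure :=
          mem_map_topologicalClosure _ h1
        have h3 : N₀.map (SS (-1)).toLinearMap = M₀ := by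
          rw [hN₀, map_span_range]
          congr 1
          ext v
          constructor
          · rintro ⟨n, rfl⟩
            refine ⟨n, ?_⟩
            show SS (n : ℤ) g = SS (-1) (SS ((n + 1 : ℕ) : ℤ) g)
            rw [SS_SS]; congr 1; push_cast; ring
          · rintro ⟨n, rfl⟩
            refine ⟨n, ?_⟩
            show SS (-1) (SS ((n + 1 : ℕ) : ℤ) g) = SS (n : ℤ) g
            rw [SS_SS]; congr 1; push_cast; ring
        rw [h3] at h2
        have h4 : SS (-1) (SS (-(k : ℤ)) g) = SS (-((k+1 : ℕ) : ℤ)) g := by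
          rw [SS_SS]; congr 1; push_cast; ring
        rwa [h4] at h2
    refine eq_zero_of_repr_eq_zero g fun m => ?_
    have hj := key (m.toNat + 1)
    have hj2 := hMHardy hj (m - (m.toNat + 1 : ℕ)) (by omega)
    rw [repr_SS] at hj2
    convert hj2 using 2
    push_cast; ring
  · -- Case 2
    haveI : CompleteSpace N := N₀.isClosed_topologicalClosure.completeSpace_coe
    set φ : L2 := g - (N.orthogonalProjectionOnto g : L2) with hφdef
    have hφ0 : φ ≠ 0 := by
      intro hc
      apply hgN
      have : g = (N.orthogonalProjectionOnto g : L2) := by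
        have := sub_eq_zero.mp hc; exact this
      rw [this]; exact (N.orthogonalProjectionOnto g).2
    have hφM : φ ∈ M := M.sub_mem hgM (hNM (N.orthogonalProjectionOnto g).2)
    have hφorthN : φ ∈ Nᗮ := N.sub_starProjection_mem_orthogonal g
    have horth : ∀ n : ℤ, 1 ≤ n → (inner ℂ (SS n φ) φ : ℂ) = 0 := by
      intro n hn
      have hSn : SS n φ ∈ N := by
        have h2 : SS n φ ∈ (M₀.map (SS n).toLinearMap).topologicalClosure :=
          mem_map_topologicalClosure _ hφM
        have h3 : M₀.map (SS n).toLinearMap ≤ N₀ := by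
          rw [hM₀, map_span_range]
          refine Submodule.span_le.mpr ?_
          rintro _ ⟨k, rfl⟩
          refine Submodule.subset_span ⟨(n + k - 1).toNat, ?_⟩
          show SS (((n + k - 1).toNat + 1 : ℕ) : ℤ) g = SS n (SS (k : ℤ) g)
          rw [SS_SS]; congr 1; push_cast [Int.toNat_of_nonneg (by omega : (0:ℤ) ≤ n + k - 1)]; ring
        exact Submodule.topologicalClosure_mono h3 h2
      exact (Submodule.mem_orthogonal N φ).mp hφorthN _ hSn
    have hφE : ∀ᵐ x ∂μT, x ∈ E → (φ : 𝕋 → ℂ) x = 0 := mem_VE_iff.mp (hMV hφM)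
    exact (case2core φ hφ0 horth E hE hμE hφE).elim

end Aux2
section Aux5

local notation "𝕋" => AddCircle (2 * π)

lemma repr_conjLp (h : L2) (n : ℤ) :
    fourierBasis.repr (conjLp h) n = conj (fourierBasis.repr h (-n)) := by
  rw [fourierBasis_repr, fourierBasis_repr,
    fourierCoeff_congr_ae' (conjLp_coe h)]
  unfold fourierCoeff
  rw [← integral_conj]
  refine integral_congr_ae (Filter.Eventually.of_forall fun x => ?_)
  show (fourier (-n)) x • conj ((h : 𝕋 → ℂ) x) = conj ((fourier (- -n)) x • (h : 𝕋 → ℂ) x)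
  simp only [smul_eq_mul, map_mul, neg_neg]
  rw [fourier_neg]

lemma LPneg (h : L2) (hh : ∀ n : ℤ, 0 ≤ n → fourierBasis.repr h n = 0)
    (E : Set 𝕋) (hE : MeasurableSet E) (hμE : μT E ≠ 0)
    (h0 : ∀ᵐ x ∂μT, x ∈ E → (h : 𝕋 → ℂ) x = 0) : h = 0 := by
  have hconj : ∀ n : ℤ, n < 0 → fourierBasis.repr (conjLp h) n = 0 := fun n hn => by
    rw [repr_conjLp, hh (-n) (by omega), map_zero]
  have h0' : ∀ᵐ x ∂μT, x ∈ E → (conjLp h : 𝕋 → ℂ) x = 0 := by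
    filter_upwards [conjLp_coe h, h0] with x h1 h2 hxE
    simp only [h1]
    rw [h2 hxE, map_zero]
  have hLP := LP (conjLp h) hconj E hE hμE h0'
  rw [Lp_eq_zero_iff] at hLP ⊢
  filter_upwards [conjLp_coe h, hLP] with x h1 h2
  have h3 : conj ((h : 𝕋 → ℂ) x) = 0 := by
    have h4 : (conjLp h : 𝕋 → ℂ) x = conj ((h : 𝕋 → ℂ) x) := h1
    rw [← h4]; exact h2
  have h5 := congrArg conj h3
  simpa using h5

end Aux5
/-- If `{a,b}` is nondegenerate, `f ∈ ker S_{a,b}`, and `P⁺f` or `P⁻f` vanishes on a set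
of positive measure, then `f = 0`. -/
theorem statement13 (a b : Linf) (h : Nondegenerate a b) (f : L2)
    (hf : pairedS a b f = 0)
    (hz : μT {x | (Pplus f : AddCircle (2 * π) → ℂ) x = 0} ≠ 0
        ∨ μT {x | (Pminus f : AddCircle (2 * π) → ℂ) x = 0} ≠ 0) :
    f = 0 := by
  obtain ⟨ha, hb, -⟩ := h
  set g : L2 := Pplus f with hgdef
  set k : L2 := Pminus f with hkdef
  have hgH : g ∈ Hardy := (Hardy.orthogonalProjectionOnto f).2
  have hgneg : ∀ n : ℤ, n < 0 → fourierBasis.repr g n = 0 := fun n hn => hgH n hn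
  have hkeq : k = f - g := by
    rw [hkdef, hgdef]
    show (ContinuousLinearMap.id ℂ L2 - Pplus) f = f - Pplus f
    simp
  have hkmem : k ∈ Hardyᗮ := by
    rw [hkeq]
    exact Hardy.sub_starProjection_mem_orthogonal f
  have hkneg : ∀ n : ℤ, 0 ≤ n → fourierBasis.repr k n = 0 := by
    intro n hn
    rw [fourierBasis.repr_apply_apply]
    refine (Submodule.mem_orthogonal Hardy k).mp hkmem _ ?_
    intro m hm
    rw [HilbertBasis.repr_self, lp.single_apply]
    simp [show m ≠ n by omega]
  have hae : ∀ᵐ x ∂μT, a x * (g : AddCircle (2 * π) → ℂ) x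
      + b x * (k : AddCircle (2 * π) → ℂ) x = 0 := by
    have h1 : pairedS a b f = mul2 a g + mul2 b k := rfl
    rw [h1] at hf
    have h2 := (Lp_eq_zero_iff (mul2 a g + mul2 b k)).mp hf
    filter_upwards [h2, Lp.coeFn_add (mul2 a g) (mul2 b k), mul2_coe a g, mul2_coe b k]
      with x h3 h4 h5 h6
    rw [← h5, ← h6]
    have h7 : ((mul2 a g : L2) : AddCircle (2 * π) → ℂ) x
        + ((mul2 b k : L2) : AddCircle (2 * π) → ℂ) x = 0 := by
      rw [← Pi.add_apply, ← h4]; simpa using h3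
    exact h7
  obtain ⟨g₀, hg₀m, hg₀⟩ : ∃ g₀, Measurable g₀ ∧ (g : AddCircle (2 * π) → ℂ) =ᵐ[μT] g₀ :=
    ⟨(Lp.aestronglyMeasurable g).mk _,
      ((Lp.aestronglyMeasurable g).stronglyMeasurable_mk).measurable,
      (Lp.aestronglyMeasurable g).ae_eq_mk⟩
  obtain ⟨k₀, hk₀m, hk₀⟩ : ∃ k₀, Measurable k₀ ∧ (k : AddCircle (2 * π) → ℂ) =ᵐ[μT] k₀ :=
    ⟨(Lp.aestronglyMeasurable k).mk _,
      ((Lp.aestronglyMeasurable k).stronglyMeasurable_mk).measurable,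
      (Lp.aestronglyMeasurable k).ae_eq_mk⟩
  set E : Set (AddCircle (2 * π)) := g₀ ⁻¹' {0} ∩ k₀ ⁻¹' {0} with hEdef
  have hE : MeasurableSet E :=
    (hg₀m (measurableSet_singleton 0)).inter (hk₀m (measurableSet_singleton 0))
  have hgood : ∀ᵐ x ∂μT, (g : AddCircle (2 * π) → ℂ) x = g₀ x
      ∧ (k : AddCircle (2 * π) → ℂ) x = k₀ x
      ∧ a x * (g : AddCircle (2 * π) → ℂ) x + b x * (k : AddCircle (2 * π) → ℂ) x = 0
      ∧ a x ≠ 0 ∧ b x ≠ 0 := by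
    filter_upwards [hg₀, hk₀, hae, ha, hb] with x h1 h2 h3 h4 h5
    exact ⟨h1, h2, h3, h4, h5⟩
  have hPc : μT {x | ¬ ((g : AddCircle (2 * π) → ℂ) x = g₀ x
      ∧ (k : AddCircle (2 * π) → ℂ) x = k₀ x
      ∧ a x * (g : AddCircle (2 * π) → ℂ) x + b x * (k : AddCircle (2 * π) → ℂ) x = 0
      ∧ a x ≠ 0 ∧ b x ≠ 0)} = 0 := hgood
  have hμE : μT E ≠ 0 := by
    intro hE0
    rcases hz with hzg | hzk
    · apply hzg
      refine measure_mono_null ?_ (measure_union_null hE0 hPc)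
      intro x hx
      by_cases hP : (g : AddCircle (2 * π) → ℂ) x = g₀ x
          ∧ (k : AddCircle (2 * π) → ℂ) x = k₀ x
          ∧ a x * (g : AddCircle (2 * π) → ℂ) x + b x * (k : AddCircle (2 * π) → ℂ) x = 0
          ∧ a x ≠ 0 ∧ b x ≠ 0
      · left
        obtain ⟨h1, h2, h3, -, h5⟩ := hP
        have hgx : (g : AddCircle (2 * π) → ℂ) x = 0 := hx
        have hkx : (k : AddCircle (2 * π) → ℂ) x = 0 := by
          rw [hgx, mul_zero, zero_add] at h3
          rcases mul_eq_zero.mp h3 with h | h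
          · exact absurd h h5
          · exact h
        exact ⟨show g₀ x = 0 by rw [← h1]; exact hgx,
          show k₀ x = 0 by rw [← h2]; exact hkx⟩
      · right; exact hP
    · apply hzk
      refine measure_mono_null ?_ (measure_union_null hE0 hPc)
      intro x hx
      by_cases hP : (g : AddCircle (2 * π) → ℂ) x = g₀ x
          ∧ (k : AddCircle (2 * π) → ℂ) x = k₀ x
          ∧ a x * (g : AddCircle (2 * π) → ℂ) x + b x * (k : AddCircle (2 * π) → ℂ) x = 0
          ∧ a x ≠ 0 ∧ b x ≠ 0
      · left
        obtain ⟨h1, h2, h3, h4, -⟩ := hP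
        have hkx : (k : AddCircle (2 * π) → ℂ) x = 0 := hx
        have hgx : (g : AddCircle (2 * π) → ℂ) x = 0 := by
          rw [hkx, mul_zero, add_zero] at h3
          rcases mul_eq_zero.mp h3 with h | h
          · exact absurd h h4
          · exact h
        exact ⟨show g₀ x = 0 by rw [← h1]; exact hgx,
          show k₀ x = 0 by rw [← h2]; exact hkx⟩
      · right; exact hP
  have h0g : ∀ᵐ x ∂μT, x ∈ E → (g : AddCircle (2 * π) → ℂ) x = 0 := by
    filter_upwards [hg₀] with x h1 hxE
    rw [h1]; exact hxE.1
  have h0k : ∀ᵐ x ∂μT, x ∈ E → (k : AddCircle (2 * π) → ℂ) x = 0 := by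
    filter_upwards [hk₀] with x h1 hxE
    rw [h1]; exact hxE.2
  have hg0 : g = 0 := LP g hgneg E hE hμE h0g
  have hk0 : k = 0 := LPneg k hkneg E hE hμE h0k
  have : f = g + k := by rw [hkeq]; abel
  rw [this, hg0, hk0, add_zero]

end
end
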